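/- Let m ≥ 1 be an integer and α, α̃ ∈ ℂ. Let f, f̃ : ℝ × ℤ → ℂ be differentiable in the time variable and satisfy ∂_t f(t,n) = f(t,n)·(f(t,n) − α)·(∏_{s=1}^{m} f(t,n+s) − ∏_{s=1}^{m} f(t,n−s)) and ∂_t f̃(t,n) = f̃(t,n)·(f̃(t,n) − α̃)·(∏_{s=1}^{m} f̃(t,n+s) − ∏_{s=1}^{m} f̃(t,n−s)) for all t, n. Define the residual R(t,n) := (f(t,n+m) − α)·∏_{s=0}^{m−1} f(t,n+s) − (∏_{s=1}^{m} f̃(t,n+s))·(f̃(t,n) − α̃). If for some time t₀ the relation R(t₀,n) = 0 holds for all n ∈ ℤ, then ∂_t R(t₀,n) = 0 for all n ∈ ℤ. -/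

import Mathlib

/-- The equation `(f_m - α) f_{m-1} ⋯ f = f̃_m ⋯ f̃_1 (f̃ - α̃)` defines the n-part of
the Bäcklund transformation for the modified Bogoyavlensky lattice: differentiating it
in virtue of the two lattice flows yields a relation which holds identically in virtue
of the equation itself. -/
theorem backlund_modified_bogoyavlensky
    (m : ℕ) (hm : 1 ≤ m) (α α' : ℂ)
    (f f' : ℝ → ℤ → ℂ)
    (hf : ∀ (t : ℝ) (n : ℤ),
      HasDerivAt (fun τ => f τ n)
        (f t n * (f t n - α) *
          ((∏ s ∈ Finset.range m, f t (n + s + 1)) -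
            ∏ s ∈ Finset.range m, f t (n - s - 1))) t)
    (hf' : ∀ (t : ℝ) (n : ℤ),
      HasDerivAt (fun τ => f' τ n)
        (f' t n * (f' t n - α') *
          ((∏ s ∈ Finset.range m, f' t (n + s + 1)) -
            ∏ s ∈ Finset.range m, f' t (n - s - 1))) t)
    (R : ℝ → ℤ → ℂ)
    (hR : ∀ (t : ℝ) (n : ℤ),
      R t n = (f t (n + m) - α) * (∏ s ∈ Finset.range m, f t (n + s))
        - (∏ s ∈ Finset.range m, f' t (n + s + 1)) * (f' t n - α'))
    (t₀ : ℝ) (hR0 : ∀ n : ℤ, R t₀ n = 0) :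
    ∀ n : ℤ, deriv (fun t => R t n) t₀ = 0 := by
  classical
  intro n
  -- abbreviations for the window products at time t₀
  set a : ℤ → ℂ := fun j => ∏ s ∈ Finset.range m, f t₀ (j + s) with ha
  set b : ℤ → ℂ := fun j => ∏ s ∈ Finset.range m, f' t₀ (j + s) with hb
  -- shifted product identities
  have haup : ∀ j : ℤ, (∏ s ∈ Finset.range m, f t₀ (j + s + 1)) = a (j + 1) := by
    intro j
    simp only [ha]
    exact Finset.prod_congr rfl fun s _ => by congr 1; ring
  have hbup : ∀ j : ℤ, (∏ s ∈ Finset.range m, f' t₀ (j + s + 1)) = b (j + 1) := by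
    intro j
    simp only [hb]
    exact Finset.prod_congr rfl fun s _ => by congr 1; ring
  have hadown : ∀ j : ℤ, (∏ s ∈ Finset.range m, f t₀ (j - s - 1)) = a (j - m) := by
    intro j
    simp only [ha]
    have h1 := Finset.prod_range_reflect (fun s : ℕ => f t₀ (j - 1 - s)) m
    have e1 : (∏ s ∈ Finset.range m, f t₀ (j - s - 1))
        = ∏ s ∈ Finset.range m, f t₀ (j - 1 - s) :=
      Finset.prod_congr rfl fun s _ => by congr 1; ring
    rw [e1, ← h1]
    refine Finset.prod_congr rfl fun s hs => ?_
    simp only [Finset.mem_range] at hs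
    congr 1
    omega
  have hbdown : ∀ j : ℤ, (∏ s ∈ Finset.range m, f' t₀ (j - s - 1)) = b (j - m) := by
    intro j
    simp only [hb]
    have h1 := Finset.prod_range_reflect (fun s : ℕ => f' t₀ (j - 1 - s)) m
    have e1 : (∏ s ∈ Finset.range m, f' t₀ (j - s - 1))
        = ∏ s ∈ Finset.range m, f' t₀ (j - 1 - s) :=
      Finset.prod_congr rfl fun s _ => by congr 1; ring
    rw [e1, ← h1]
    refine Finset.prod_congr rfl fun s hs => ?_
    simp only [Finset.mem_range] at hs
    congr 1
    omega
  -- shift identity: f j * a (j+1) = f (j+m) * a j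
  have hshift : ∀ j : ℤ, f t₀ j * a (j + 1) = f t₀ (j + m) * a j := by
    intro j
    have h1 : (∏ s ∈ Finset.range (m + 1), f t₀ (j + s)) = f t₀ j * a (j + 1) := by
      rw [Finset.prod_range_succ']
      rw [mul_comm]
      congr 1
      · norm_num
      · simp only [ha]
        exact Finset.prod_congr rfl fun s _ => by congr 1; push_cast; ring
    have h2 : (∏ s ∈ Finset.range (m + 1), f t₀ (j + s)) = a j * f t₀ (j + m) := by
      simp only [ha, Finset.prod_range_succ]
    rw [← h1, h2]; ring
  have hshift' : ∀ j : ℤ, f' t₀ j * b (j + 1) = f' t₀ (j + m) * b j := by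
    intro j
    have h1 : (∏ s ∈ Finset.range (m + 1), f' t₀ (j + s)) = f' t₀ j * b (j + 1) := by
      rw [Finset.prod_range_succ']
      rw [mul_comm]
      congr 1
      · norm_num
      · simp only [hb]
        exact Finset.prod_congr rfl fun s _ => by congr 1; push_cast; ring
    have h2 : (∏ s ∈ Finset.range (m + 1), f' t₀ (j + s)) = b j * f' t₀ (j + m) := by
      simp only [hb, Finset.prod_range_succ]
    rw [← h1, h2]; ring
  -- the Bäcklund quantity P and the constraint
  set P : ℤ → ℂ := fun j => (f t₀ (j + m) - α) * a j with hPdef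
  have hP : ∀ j : ℤ, P j = b (j + 1) * (f' t₀ j - α') := by
    intro j
    have h0 := hR0 j
    rw [hR t₀ j, hbup j, sub_eq_zero] at h0
    simp only [hPdef, ha]
    exact h0
  -- auxiliary algebraic identities
  have K1 : ∀ j : ℤ, (f t₀ j - α) * a (j + 1) = P j + α * (a j - a (j + 1)) := by
    intro j
    simp only [hPdef]
    linear_combination hshift j
  have K2 : ∀ j : ℤ, (f t₀ j - α) * a (j - m) = P (j - m) := by
    intro j
    simp only [hPdef]
    rw [show j - (m : ℤ) + m = j by ring]
  have K3 : ∀ j : ℤ, (f' t₀ j - α') * b (j + 1) = P j := by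
    intro j
    rw [hP j]; ring
  have K4 : ∀ j : ℤ, (f' t₀ j - α') * b (j - m) =
      P (j - m) + α' * (b (j - m + 1) - b (j - m)) := by
    intro j
    have h1 := hshift' (j - m)
    rw [show j - (m : ℤ) + m = j by ring] at h1
    linear_combination K3 (j - m) - h1
  -- derivative of the first window product
  have hA : HasDerivAt (fun t => ∏ s ∈ Finset.range m, f t (n + s))
      (a n * ∑ k ∈ Finset.range m,
        (f t₀ (n + k) - α) * (a (n + k + 1) - a (n + k - m))) t₀ := by
    have h := HasDerivAt.finset_prod (u := Finset.range m) (𝕜 := ℝ)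
      (f := fun (i : ℕ) (t : ℝ) => f t (n + i))
      (f' := fun i => f t₀ (n + i) * (f t₀ (n + i) - α) *
        ((∏ s ∈ Finset.range m, f t₀ (n + i + s + 1)) -
          ∏ s ∈ Finset.range m, f t₀ (n + i - s - 1))) (x := t₀)
      (fun i _ => hf t₀ (n + i))
    have heq : (∑ i ∈ Finset.range m, (∏ j ∈ (Finset.range m).erase i, f t₀ (n + j)) •
        (f t₀ (n + i) * (f t₀ (n + i) - α) *
          ((∏ s ∈ Finset.range m, f t₀ (n + i + s + 1)) -
            ∏ s ∈ Finset.range m, f t₀ (n + i - s - 1))))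
        = a n * ∑ k ∈ Finset.range m,
            (f t₀ (n + k) - α) * (a (n + k + 1) - a (n + k - m)) := by
      rw [Finset.mul_sum]
      refine Finset.sum_congr rfl fun k hk => ?_
      rw [haup (n + k), hadown (n + k), smul_eq_mul]
      have hprod : (∏ j ∈ (Finset.range m).erase k, f t₀ (n + j)) * f t₀ (n + k) = a n := by
        simpa only [ha] using
          Finset.prod_erase_mul (Finset.range m) (fun s : ℕ => f t₀ (n + s)) hk
      calc (∏ j ∈ (Finset.range m).erase k, f t₀ (n + j)) *
            (f t₀ (n + k) * (f t₀ (n + k) - α) * (a (n + k + 1) - a (n + k - m)))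
          = ((∏ j ∈ (Finset.range m).erase k, f t₀ (n + j)) * f t₀ (n + k)) *
            ((f t₀ (n + k) - α) * (a (n + k + 1) - a (n + k - m))) := by ring
        _ = a n * ((f t₀ (n + k) - α) * (a (n + k + 1) - a (n + k - m))) := by rw [hprod]
    rw [← heq]
    simpa only [Finset.prod_fn] using h
  -- derivative of the second window product
  have hB : HasDerivAt (fun t => ∏ s ∈ Finset.range m, f' t (n + s + 1))
      (b (n + 1) * ∑ k ∈ Finset.range m,
        (f' t₀ (n + k + 1) - α') * (b (n + k + 2) - b (n + k + 1 - m))) t₀ := by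
    have h := HasDerivAt.finset_prod (u := Finset.range m) (𝕜 := ℝ)
      (f := fun (i : ℕ) (t : ℝ) => f' t (n + i + 1))
      (f' := fun i => f' t₀ (n + i + 1) * (f' t₀ (n + i + 1) - α') *
        ((∏ s ∈ Finset.range m, f' t₀ (n + i + 1 + s + 1)) -
          ∏ s ∈ Finset.range m, f' t₀ (n + i + 1 - s - 1))) (x := t₀)
      (fun i _ => hf' t₀ (n + i + 1))
    have heq : (∑ i ∈ Finset.range m, (∏ j ∈ (Finset.range m).erase i, f' t₀ (n + j + 1)) •
        (f' t₀ (n + i + 1) * (f' t₀ (n + i + 1) - α') *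
          ((∏ s ∈ Finset.range m, f' t₀ (n + i + 1 + s + 1)) -
            ∏ s ∈ Finset.range m, f' t₀ (n + i + 1 - s - 1))))
        = b (n + 1) * ∑ k ∈ Finset.range m,
            (f' t₀ (n + k + 1) - α') * (b (n + k + 2) - b (n + k + 1 - m)) := by
      rw [Finset.mul_sum]
      refine Finset.sum_congr rfl fun k hk => ?_
      rw [hbup (n + k + 1), hbdown (n + k + 1), smul_eq_mul]
      have hprod : (∏ j ∈ (Finset.range m).erase k, f' t₀ (n + j + 1)) * f' t₀ (n + k + 1)
          = b (n + 1) := by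
        rw [Finset.prod_erase_mul (Finset.range m) (fun s : ℕ => f' t₀ (n + s + 1)) hk,
          hbup n]
      rw [show n + (k : ℤ) + 1 + 1 = n + k + 2 by ring]
      calc (∏ j ∈ (Finset.range m).erase k, f' t₀ (n + j + 1)) *
            (f' t₀ (n + k + 1) * (f' t₀ (n + k + 1) - α') * (b (n + k + 2) - b (n + k + 1 - m)))
          = ((∏ j ∈ (Finset.range m).erase k, f' t₀ (n + j + 1)) * f' t₀ (n + k + 1)) *
            ((f' t₀ (n + k + 1) - α') * (b (n + k + 2) - b (n + k + 1 - m))) := by ring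
        _ = b (n + 1) * ((f' t₀ (n + k + 1) - α') * (b (n + k + 2) - b (n + k + 1 - m))) := by
            rw [hprod]
    rw [← heq]
    simpa only [Finset.prod_fn] using h
  -- the full derivative of R at t₀
  set S : ℂ := ∑ k ∈ Finset.range m,
    (f t₀ (n + k) - α) * (a (n + k + 1) - a (n + k - m)) with hS
  set T : ℂ := ∑ k ∈ Finset.range m,
    (f' t₀ (n + k + 1) - α') * (b (n + k + 2) - b (n + k + 1 - m)) with hT
  have hRd : HasDerivAt (fun t => R t n)
      ((f t₀ (n + m) * (f t₀ (n + m) - α) * (a (n + m + 1) - a (n + m - m))) * a n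
        + (f t₀ (n + m) - α) * (a n * S)
        - ((b (n + 1) * T) * (f' t₀ n - α')
          + b (n + 1) * (f' t₀ n * (f' t₀ n - α') * (b (n + 1) - b (n - m))))) t₀ := by
    have hfun : (fun t => R t n) = fun t =>
        (f t (n + m) - α) * (∏ s ∈ Finset.range m, f t (n + s))
          - (∏ s ∈ Finset.range m, f' t (n + s + 1)) * (f' t n - α') := funext fun t => hR t n
    rw [hfun]
    have h1 : HasDerivAt (fun t : ℝ => f t (n + m) - α)
        (f t₀ (n + m) * (f t₀ (n + m) - α) * (a (n + m + 1) - a (n + m - m))) t₀ := by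
      have := (hf t₀ (n + m)).sub_const α
      rwa [haup (n + m), hadown (n + m)] at this
    have h2 : HasDerivAt (fun t : ℝ => f' t n - α')
        (f' t₀ n * (f' t₀ n - α') * (b (n + 1) - b (n - m))) t₀ := by
      have := (hf' t₀ n).sub_const α'
      rwa [hbup n, hbdown n] at this
    have h3 := (h1.mul hA).sub (hB.mul h2)
    have hprodA : (∏ s ∈ Finset.range m, f t₀ (n + s)) = a n := by simp only [ha]
    rw [hprodA, hbup n] at h3
    exact h3
  rw [hRd.deriv]
  -- now the pure algebra: rewrite S and T through P and telescope
  set SP : ℂ := ∑ k ∈ Finset.range m, P (n + k) with hSP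
  set SPm : ℂ := ∑ k ∈ Finset.range m, P (n + k - m) with hSPm
  set SP1 : ℂ := ∑ k ∈ Finset.range m, P (n + k + 1) with hSP1
  set SP1m : ℂ := ∑ k ∈ Finset.range m, P (n + k + 1 - m) with hSP1m
  have hSval : S = SP - SPm + α * (a n - a (n + m)) := by
    have hterm : ∀ k ∈ Finset.range m,
        (f t₀ (n + k) - α) * (a (n + k + 1) - a (n + k - m))
          = (P (n + k) - P (n + k - m)) + α * (a (n + k) - a (n + k + 1)) := by
      intro k _
      linear_combination K1 (n + k) - K2 (n + k)
    have htel : (∑ k ∈ Finset.range m, (a (n + k) - a (n + k + 1))) = a n - a (n + m) := by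
      calc (∑ k ∈ Finset.range m, (a (n + k) - a (n + k + 1)))
          = ∑ k ∈ Finset.range m,
            ((fun k : ℕ => a (n + k)) k - (fun k : ℕ => a (n + k)) (k + 1)) :=
            Finset.sum_congr rfl fun k _ => by congr 2 <;> omega
        _ = a (n + (0 : ℕ)) - a (n + (m : ℕ)) := Finset.sum_range_sub' (fun k : ℕ => a (n + k)) m
        _ = a n - a (n + m) := by norm_num
    rw [hS, Finset.sum_congr rfl hterm, Finset.sum_add_distrib, Finset.sum_sub_distrib,
      ← Finset.mul_sum, htel, hSP, hSPm]
  have hTval : T = SP1 - SP1m + α' * (b (n - m + 1) - b (n + 1)) := by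
    have hterm : ∀ k ∈ Finset.range m,
        (f' t₀ (n + k + 1) - α') * (b (n + k + 2) - b (n + k + 1 - m))
          = (P (n + k + 1) - P (n + k + 1 - m))
            + α' * (b (n + k + 1 - m) - b (n + k + 1 - m + 1)) := by
      intro k _
      have h1 := K3 (n + k + 1)
      rw [show n + (k : ℤ) + 1 + 1 = n + k + 2 by ring] at h1
      linear_combination h1 - K4 (n + k + 1)
    have htel : (∑ k ∈ Finset.range m, (b (n + k + 1 - m) - b (n + k + 1 - m + 1)))
        = b (n - m + 1) - b (n + 1) := by
      calc (∑ k ∈ Finset.range m, (b (n + k + 1 - m) - b (n + k + 1 - m + 1)))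
          = ∑ k ∈ Finset.range m,
            ((fun k : ℕ => b (n - m + 1 + k)) k - (fun k : ℕ => b (n - m + 1 + k)) (k + 1)) :=
            Finset.sum_congr rfl fun k _ => by congr 2 <;> omega
        _ = b (n - m + 1 + (0 : ℕ)) - b (n - m + 1 + (m : ℕ)) :=
            Finset.sum_range_sub' (fun k : ℕ => b (n - m + 1 + k)) m
        _ = b (n - m + 1) - b (n + 1) := by
            rw [show n - (m : ℤ) + 1 + (m : ℕ) = n + 1 by push_cast; ring]
            norm_num
    rw [hT, Finset.sum_congr rfl hterm, Finset.sum_add_distrib, Finset.sum_sub_distrib,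
      ← Finset.mul_sum, htel, hSP1, hSP1m]
  have hT3 : SP - SP1 = P n - P (n + m) := by
    rw [hSP, hSP1, ← Finset.sum_sub_distrib]
    calc (∑ k ∈ Finset.range m, (P (n + k) - P (n + k + 1)))
        = ∑ k ∈ Finset.range m,
          ((fun k : ℕ => P (n + k)) k - (fun k : ℕ => P (n + k)) (k + 1)) :=
          Finset.sum_congr rfl fun k _ => by congr 2 <;> omega
      _ = P (n + (0 : ℕ)) - P (n + (m : ℕ)) := Finset.sum_range_sub' (fun k : ℕ => P (n + k)) m
      _ = P n - P (n + m) := by norm_num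
  have hT4 : SP1m - SPm = P n - P (n - m) := by
    rw [hSP1m, hSPm, ← Finset.sum_sub_distrib]
    calc (∑ k ∈ Finset.range m, (P (n + k + 1 - m) - P (n + k - m)))
        = ∑ k ∈ Finset.range m,
          ((fun k : ℕ => P (n - m + k)) (k + 1) - (fun k : ℕ => P (n - m + k)) k) :=
          Finset.sum_congr rfl fun k _ => by congr 2 <;> omega
      _ = P (n - m + (m : ℕ)) - P (n - m + (0 : ℕ)) :=
          Finset.sum_range_sub (fun k : ℕ => P (n - m + k)) m
      _ = P n - P (n - m) := by
          rw [show n - (m : ℤ) + (m : ℕ) = n by push_cast; ring]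
          norm_num
  -- the remaining closed-form identities
  have K5 : f t₀ (n + m) * (a (n + m + 1) - a n)
      = P (n + m) - P n + α * (a (n + m) - a n) := by
    simp only [hPdef]
    linear_combination hshift (n + m)
  have K6 : f' t₀ n * (b (n + 1) - b (n - m))
      = P n - P (n - m) + α' * (b (n + 1) - b (n - m + 1)) := by
    have h1 := hshift' (n - m)
    rw [show n - (m : ℤ) + m = n by ring] at h1
    linear_combination K3 n - K3 (n - m) + h1
  -- assemble everything
  have hPn : P n = (f t₀ (n + m) - α) * a n := by simp only [hPdef]
  have hPn' : P n = b (n + 1) * (f' t₀ n - α') := hP n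
  rw [show n + (m : ℤ) - m = n by ring]
  linear_combination ((f t₀ (n + m) - α) * a n) * K5
    + ((f t₀ (n + m) - α) * a n) * hSval
    - (b (n + 1) * (f' t₀ n - α')) * hTval
    - (b (n + 1) * (f' t₀ n - α')) * K6
    - (P (n + m) - P n + α * (a (n + m) - a n)
        + SP - SPm + α * (a n - a (n + m))) * hPn
    + (SP1 - SP1m + α' * (b (n - m + 1) - b (n + 1))
        + P n - P (n - m) + α' * (b (n + 1) - b (n - m + 1))) * hPn'
    + P n * hT3 + P n * hT4
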